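/- Let k ≥ 1. Let A be a nonnegative real square matrix indexed by Σ i, Fin (s i) (with s i ≥ 1 for all i) partitioned into k² blocks with square diagonal blocks, and let B be a nonnegative real square matrix indexed by Σ i, Fin (t i) (with t i ≥ 1 for all i) partitioned into k² blocks with square diagonal blocks. Let A↑ be the k×k matrix of maximum block row sums of A, and B↓ the k×k matrix of minimum block row sums of B. If A↑ i j ≤ B↓ i j for all i, j, then ρ(A) ≤ ρ(B). -/

import Mathlib

open Matrix

/-- Spectral radius of a real square matrix: the maximum of the moduli of its
complex eigenvalues (elements of the spectrum of the matrix over `ℂ`). -/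
noncomputable def specRad {n : Type*} [Fintype n] [DecidableEq n]
    (M : Matrix n n ℝ) : ℝ :=
  sSup ((fun z : ℂ => ‖z‖) '' spectrum ℂ (M.map (algebraMap ℝ ℂ)))

attribute [local instance] Matrix.linftyOpNormedRing Matrix.linftyOpNormedAlgebra

private lemma one_blocksum {k : ℕ} {s : Fin k → ℕ} (i j : Fin k) (u : Fin (s i)) :
    ∑ v : Fin (s j), (1 : Matrix (Σ i, Fin (s i)) (Σ i, Fin (s i)) ℝ) ⟨i, u⟩ ⟨j, v⟩
      = if i = j then 1 else 0 := by
  rcases eq_or_ne i j with rfl | h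
  · rw [if_pos rfl]
    have hv : ∀ v : Fin (s i),
        (1 : Matrix (Σ i, Fin (s i)) (Σ i, Fin (s i)) ℝ) ⟨i, u⟩ ⟨i, v⟩
          = if u = v then 1 else 0 := by
      intro v
      by_cases huv : u = v
      · subst huv; rw [Matrix.one_apply_eq, if_pos rfl]
      · rw [Matrix.one_apply_ne (by simp [huv]), if_neg huv]
    simp [hv]
  · rw [if_neg h]
    refine Finset.sum_eq_zero fun v _ => Matrix.one_apply_ne ?_
    exact fun he => h (congrArg Sigma.fst he)

private lemma pow_entry_nonneg' {n : Type*} [Fintype n] [DecidableEq n] {M : Matrix n n ℝ}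
    (h : ∀ p q, 0 ≤ M p q) : ∀ m p q, 0 ≤ (M ^ m) p q := by
  intro m
  induction m with
  | zero => intro p q; rw [pow_zero, Matrix.one_apply]; split <;> norm_num
  | succ m ih =>
    intro p q
    rw [pow_succ, Matrix.mul_apply]
    exact Finset.sum_nonneg fun r _ => mul_nonneg (ih p r) (h r q)

private lemma pow_entry_mono {n : Type*} [Fintype n] [DecidableEq n] {M N : Matrix n n ℝ}
    (hM : ∀ p q, 0 ≤ M p q) (h : ∀ p q, M p q ≤ N p q) :
    ∀ m p q, (M ^ m) p q ≤ (N ^ m) p q := by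
  intro m
  induction m with
  | zero => intro p q; rw [pow_zero, pow_zero]
  | succ m ih =>
    intro p q
    rw [pow_succ, pow_succ, Matrix.mul_apply, Matrix.mul_apply]
    refine Finset.sum_le_sum fun r _ => mul_le_mul (ih p r) (h r q) (hM r q)
      (le_trans (pow_entry_nonneg' hM m p r) (ih p r))

private lemma blocksum_pow_le {k : ℕ} {s : Fin k → ℕ}
    (A : Matrix (Σ i, Fin (s i)) (Σ i, Fin (s i)) ℝ) (C : Matrix (Fin k) (Fin k) ℝ)
    (hA : ∀ p q, 0 ≤ A p q) (hC0 : ∀ i j, 0 ≤ C i j)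
    (hC : ∀ (i : Fin k) (u : Fin (s i)) (j : Fin k), ∑ v : Fin (s j), A ⟨i, u⟩ ⟨j, v⟩ ≤ C i j) :
    ∀ (n : ℕ) (i : Fin k) (u : Fin (s i)) (j : Fin k),
      ∑ v : Fin (s j), (A ^ n) ⟨i, u⟩ ⟨j, v⟩ ≤ (C ^ n) i j := by
  intro n
  induction n with
  | zero =>
    intro i u j
    rw [pow_zero, pow_zero, one_blocksum, Matrix.one_apply]
  | succ n ih =>
    intro i u j
    rw [pow_succ' A, pow_succ' C, Matrix.mul_apply]
    calc ∑ v : Fin (s j), (A * A ^ n) ⟨i, u⟩ ⟨j, v⟩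
        = ∑ r : (Σ i, Fin (s i)), A ⟨i, u⟩ r * ∑ v : Fin (s j), (A ^ n) r ⟨j, v⟩ := by
          simp_rw [Matrix.mul_apply, Finset.mul_sum]
          rw [Finset.sum_comm]
      _ = ∑ l : Fin k, ∑ w : Fin (s l), A ⟨i, u⟩ ⟨l, w⟩ * ∑ v : Fin (s j), (A ^ n) ⟨l, w⟩ ⟨j, v⟩ := by
          rw [← Finset.univ_sigma_univ, Finset.sum_sigma]
      _ ≤ ∑ l : Fin k, ∑ w : Fin (s l), A ⟨i, u⟩ ⟨l, w⟩ * (C ^ n) l j := by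
          refine Finset.sum_le_sum fun l _ => Finset.sum_le_sum fun w _ =>
            mul_le_mul_of_nonneg_left (ih l w j) (hA _ _)
      _ = ∑ l : Fin k, (∑ w : Fin (s l), A ⟨i, u⟩ ⟨l, w⟩) * (C ^ n) l j := by
          simp_rw [Finset.sum_mul]
      _ ≤ ∑ l : Fin k, C i l * (C ^ n) l j := by
          refine Finset.sum_le_sum fun l _ =>
            mul_le_mul_of_nonneg_right (hC i u l) (pow_entry_nonneg' hC0 n l j)

private lemma le_blocksum_pow {k : ℕ} {t : Fin k → ℕ}
    (B : Matrix (Σ i, Fin (t i)) (Σ i, Fin (t i)) ℝ) (D : Matrix (Fin k) (Fin k) ℝ)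
    (hB : ∀ p q, 0 ≤ B p q) (hD0 : ∀ i j, 0 ≤ D i j)
    (hD : ∀ (i : Fin k) (u : Fin (t i)) (j : Fin k), D i j ≤ ∑ v : Fin (t j), B ⟨i, u⟩ ⟨j, v⟩) :
    ∀ (n : ℕ) (i : Fin k) (u : Fin (t i)) (j : Fin k),
      (D ^ n) i j ≤ ∑ v : Fin (t j), (B ^ n) ⟨i, u⟩ ⟨j, v⟩ := by
  intro n
  induction n with
  | zero =>
    intro i u j
    rw [pow_zero, pow_zero, one_blocksum, Matrix.one_apply]
  | succ n ih =>
    intro i u j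
    rw [pow_succ' D, pow_succ' B, Matrix.mul_apply]
    calc ∑ l : Fin k, D i l * (D ^ n) l j
        ≤ ∑ l : Fin k, (∑ w : Fin (t l), B ⟨i, u⟩ ⟨l, w⟩) * (D ^ n) l j := by
          refine Finset.sum_le_sum fun l _ =>
            mul_le_mul_of_nonneg_right (hD i u l) (pow_entry_nonneg' hD0 n l j)
      _ = ∑ l : Fin k, ∑ w : Fin (t l), B ⟨i, u⟩ ⟨l, w⟩ * (D ^ n) l j := by
          simp_rw [Finset.sum_mul]
      _ ≤ ∑ l : Fin k, ∑ w : Fin (t l), B ⟨i, u⟩ ⟨l, w⟩ * ∑ v : Fin (t j), (B ^ n) ⟨l, w⟩ ⟨j, v⟩ := by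
          refine Finset.sum_le_sum fun l _ => Finset.sum_le_sum fun w _ =>
            mul_le_mul_of_nonneg_left (ih l w j) (hB _ _)
      _ = ∑ r : (Σ i, Fin (t i)), B ⟨i, u⟩ r * ∑ v : Fin (t j), (B ^ n) r ⟨j, v⟩ := by
          rw [← Finset.univ_sigma_univ, Finset.sum_sigma]
      _ = ∑ v : Fin (t j), (B * B ^ n) ⟨i, u⟩ ⟨j, v⟩ := by
          simp_rw [Matrix.mul_apply, Finset.mul_sum]
          rw [Finset.sum_comm]

/-- Comparison of spectral radii via block row sum contractions: if each maximum
block row sum of `A` is at most the corresponding minimum block row sum of `B`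
(both partitioned into `k²` blocks with square diagonal blocks), then
`ρ(A) ≤ ρ(B)`. -/
theorem specRad_le_of_upwardContraction_le_downwardContraction
    {k : ℕ} (hk : 1 ≤ k) (s t : Fin k → ℕ)
    (hs : ∀ i, 1 ≤ s i) (ht : ∀ i, 1 ≤ t i)
    (A : Matrix (Σ i, Fin (s i)) (Σ i, Fin (s i)) ℝ)
    (hA : ∀ p q, 0 ≤ A p q)
    (B : Matrix (Σ i, Fin (t i)) (Σ i, Fin (t i)) ℝ)
    (hB : ∀ p q, 0 ≤ B p q)
    (hle : ∀ i j : Fin k,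
      Finset.univ.sup'
          (Finset.univ_nonempty_iff.mpr (Fin.pos_iff_nonempty.mp (hs i)))
          (fun u : Fin (s i) => ∑ v : Fin (s j), A ⟨i, u⟩ ⟨j, v⟩) ≤
        Finset.univ.inf'
          (Finset.univ_nonempty_iff.mpr (Fin.pos_iff_nonempty.mp (ht i)))
          (fun u : Fin (t i) => ∑ v : Fin (t j), B ⟨i, u⟩ ⟨j, v⟩)) :
    specRad A ≤ specRad B := by
  classical
  haveI : Nonempty (Fin k) := Fin.pos_iff_nonempty.mp hk
  have i0 : Fin k := Classical.arbitrary (Fin k)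
  haveI hnsA : Nonempty (Σ i, Fin (s i)) := ⟨⟨i0, ⟨0, hs i0⟩⟩⟩
  haveI hnsB : Nonempty (Σ i, Fin (t i)) := ⟨⟨i0, ⟨0, ht i0⟩⟩⟩
  -- the contraction matrices
  set C : Matrix (Fin k) (Fin k) ℝ := fun i j =>
    Finset.univ.sup' (Finset.univ_nonempty_iff.mpr (Fin.pos_iff_nonempty.mp (hs i)))
      (fun u : Fin (s i) => ∑ v : Fin (s j), A ⟨i, u⟩ ⟨j, v⟩) with hCdef
  set D : Matrix (Fin k) (Fin k) ℝ := fun i j =>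
    Finset.univ.inf' (Finset.univ_nonempty_iff.mpr (Fin.pos_iff_nonempty.mp (ht i)))
      (fun u : Fin (t i) => ∑ v : Fin (t j), B ⟨i, u⟩ ⟨j, v⟩) with hDdef
  have hCge : ∀ (i : Fin k) (u : Fin (s i)) (j : Fin k),
      ∑ v : Fin (s j), A ⟨i, u⟩ ⟨j, v⟩ ≤ C i j := fun i u j => by
    simp only [hCdef]
    exact Finset.le_sup' (fun u : Fin (s i) => ∑ v : Fin (s j), A ⟨i, u⟩ ⟨j, v⟩) (Finset.mem_univ u)
  have hDle : ∀ (i : Fin k) (u : Fin (t i)) (j : Fin k),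
      D i j ≤ ∑ v : Fin (t j), B ⟨i, u⟩ ⟨j, v⟩ := fun i u j => by
    simp only [hDdef]
    exact Finset.inf'_le (fun u : Fin (t i) => ∑ v : Fin (t j), B ⟨i, u⟩ ⟨j, v⟩) (Finset.mem_univ u)
  have hC0 : ∀ i j, 0 ≤ C i j := fun i j =>
    le_trans (Finset.sum_nonneg fun v _ => hA _ _) (hCge i ⟨0, hs i⟩ j)
  have hCD : ∀ i j, C i j ≤ D i j := fun i j => hle i j
  have hD0 : ∀ i j, 0 ≤ D i j := fun i j => le_trans (hC0 i j) (hCD i j)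
  -- comparison of row sums of powers
  have hrow : ∀ (n : ℕ) (i : Fin k) (u : Fin (s i)),
      ∑ q, (A ^ n) ⟨i, u⟩ q ≤ ∑ q, (B ^ n) ⟨i, ⟨0, ht i⟩⟩ q := by
    intro n i u
    calc ∑ q, (A ^ n) ⟨i, u⟩ q
        = ∑ j : Fin k, ∑ v : Fin (s j), (A ^ n) ⟨i, u⟩ ⟨j, v⟩ := by
          rw [← Finset.univ_sigma_univ, Finset.sum_sigma]
      _ ≤ ∑ j : Fin k, (C ^ n) i j :=
          Finset.sum_le_sum fun j _ => blocksum_pow_le A C hA hC0 hCge n i u j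
      _ ≤ ∑ j : Fin k, (D ^ n) i j :=
          Finset.sum_le_sum fun j _ => pow_entry_mono hC0 hCD n i j
      _ ≤ ∑ j : Fin k, ∑ v : Fin (t j), (B ^ n) ⟨i, ⟨0, ht i⟩⟩ ⟨j, v⟩ :=
          Finset.sum_le_sum fun j _ => le_blocksum_pow B D hB hD0 hDle n i ⟨0, ht i⟩ j
      _ = ∑ q, (B ^ n) ⟨i, ⟨0, ht i⟩⟩ q := by
          rw [← Finset.univ_sigma_univ, Finset.sum_sigma]
  -- complexifications
  set Ac : Matrix (Σ i, Fin (s i)) (Σ i, Fin (s i)) ℂ := A.map (algebraMap ℝ ℂ) with hAc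
  set Bc : Matrix (Σ i, Fin (t i)) (Σ i, Fin (t i)) ℂ := B.map (algebraMap ℝ ℂ) with hBc
  have hAcpow : ∀ n : ℕ, Ac ^ n = (A ^ n).map (algebraMap ℝ ℂ) := fun n =>
    (map_pow ((algebraMap ℝ ℂ).mapMatrix) A n).symm
  have hBcpow : ∀ n : ℕ, Bc ^ n = (B ^ n).map (algebraMap ℝ ℂ) := fun n =>
    (map_pow ((algebraMap ℝ ℂ).mapMatrix) B n).symm
  -- norm comparison
  have hnn : ∀ n : ℕ, ‖Ac ^ n‖₊ ≤ ‖Bc ^ n‖₊ := by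
    intro n
    rw [Matrix.linfty_opNNNorm_def]
    refine Finset.sup_le fun p _ => ?_
    obtain ⟨i, u⟩ := p
    have key : (↑(∑ q, ‖(Ac ^ n) ⟨i, u⟩ q‖₊) : ℝ) ≤ ↑(∑ q, ‖(Bc ^ n) ⟨i, ⟨0, ht i⟩⟩ q‖₊) := by
      push_cast
      have eA : ∀ q, ‖(Ac ^ n) ⟨i, u⟩ q‖ = (A ^ n) ⟨i, u⟩ q := by
        intro q
        rw [hAcpow n, Matrix.map_apply]
        simpa using abs_of_nonneg (pow_entry_nonneg' hA n _ q)
      have eB : ∀ q, ‖(Bc ^ n) ⟨i, ⟨0, ht i⟩⟩ q‖ = (B ^ n) ⟨i, ⟨0, ht i⟩⟩ q := by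
        intro q
        rw [hBcpow n, Matrix.map_apply]
        simpa using abs_of_nonneg (pow_entry_nonneg' hB n _ q)
      simp_rw [eA, eB]
      exact hrow n i u
    refine le_trans (by exact_mod_cast key) ?_
    rw [Matrix.linfty_opNNNorm_def]
    exact Finset.le_sup (f := fun p => ∑ q, ‖(Bc ^ n) p q‖₊)
      (Finset.mem_univ (⟨i, ⟨0, ht i⟩⟩ : Σ i, Fin (t i)))
  -- spectral radius comparison (Gelfand)
  have hsr : spectralRadius ℂ Ac ≤ spectralRadius ℂ Bc := by
    refine le_trans (spectrum.spectralRadius_le_liminf_pow_nnnorm_pow_one_div ℂ Ac) ?_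
    have hlim := spectrum.pow_nnnorm_pow_one_div_tendsto_nhds_spectralRadius Bc
    rw [← hlim.liminf_eq]
    refine Filter.liminf_le_liminf (Filter.Eventually.of_forall fun n => ?_)
    exact ENNReal.rpow_le_rpow (by exact_mod_cast hnn n) (by positivity)
  -- conclude
  have hbddB : BddAbove ((fun z : ℂ => ‖z‖) '' spectrum ℂ Bc) := by
    refine ⟨‖Bc‖, ?_⟩
    rintro x ⟨z, hz, rfl⟩
    exact le_trans (le_of_eq rfl) (spectrum.norm_le_norm_of_mem hz)
  obtain ⟨w, hw, hweq⟩ := spectrum.exists_nnnorm_eq_spectralRadius Bc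
  refine Real.sSup_le ?_ ?_
  · rintro x ⟨z, hz, rfl⟩
    have h1 : (‖z‖₊ : ENNReal) ≤ spectralRadius ℂ Ac := by
      refine le_trans ?_ (le_refl _)
      exact le_iSup₂ (f := fun k (_ : k ∈ spectrum ℂ Ac) => (‖k‖₊ : ENNReal)) z hz
    have h2 : (‖z‖₊ : ENNReal) ≤ (‖w‖₊ : ENNReal) := hweq ▸ le_trans h1 hsr
    have h3 : ‖z‖ ≤ ‖w‖ := by exact_mod_cast h2
    calc (fun z : ℂ => ‖z‖) z = ‖z‖ := rfl
      _ ≤ ‖w‖ := h3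
      _ = (fun z : ℂ => ‖z‖) w := rfl
      _ ≤ specRad B := le_csSup hbddB ⟨w, hw, rfl⟩
  · obtain ⟨z0, hz0⟩ := spectrum.nonempty Bc
    exact le_trans (norm_nonneg z0) (le_csSup hbddB ⟨z0, hz0, rfl⟩)
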